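/- In the setting of the hierarchical meta-gradient identity, suppose additionally that there is a constant C with |∂π/∂Θ (Θ₀, θ)/π(Θ₀, θ)| ≤ C for almost every θ, and let Q be any probability measure on ℝ^d. Define the GEM estimator ĝ = ∫ (∂π/∂Θ (Θ₀, θ)/π(Θ₀, θ)) dQ(θ) and let post denote the posterior probability measure with density θ ↦ ℓ(θ)π(Θ₀, θ)/m(Θ₀). Then |ĝ − d/dΘ log m(Θ)|_{Θ = Θ₀}| ≤ C·√(2·KL(post ‖ Q)), where KL denotes the Kullback–Leibler divergence. -/

import Mathlib

open MeasureTheory Real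
open scoped ENNReal

open Classical in
/-- Kullback–Leibler divergence of `P` from `Q`, taken to be `+∞` if `P` is not absolutely
continuous with respect to `Q` (or if the log-likelihood ratio is not integrable). -/
noncomputable def klDiv {E : Type*} [MeasurableSpace E] (P Q : Measure E) : ℝ≥0∞ :=
  if P ≪ Q ∧ Integrable (llr P Q) P then ENNReal.ofReal (∫ x, llr P Q x ∂P) else ⊤


private noncomputable def pkG (x : ℝ) : ℝ := (2*x + 4) * (x * Real.log x - x + 1) - 3 * (x - 1)^2
private noncomputable def pkG1 (x : ℝ) : ℝ := (4*x + 4) * Real.log x - 8*x + 8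
private noncomputable def pkG2 (x : ℝ) : ℝ := 4 * Real.log x + 4/x - 4

private lemma pkG_hasDeriv {x : ℝ} (hx : 0 < x) : HasDerivAt pkG (pkG1 x) x := by
  have hlog : HasDerivAt Real.log (1/x) x := (Real.hasDerivAt_log hx.ne').congr_deriv (by ring)
  have h1 : HasDerivAt (fun x : ℝ => x * Real.log x) (Real.log x + 1) x := by
    have : HasDerivAt (fun x : ℝ => x * Real.log x) (1 * Real.log x + x * (1/x)) x := (hasDerivAt_id x).fun_mul hlog
    convert this using 1
    field_simp
  have h2 : HasDerivAt (fun x : ℝ => x * Real.log x - x + 1) (Real.log x) x := by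
    have : HasDerivAt (fun x : ℝ => x * Real.log x - x + 1) (Real.log x + 1 - 1) x := (h1.sub (hasDerivAt_id x)).add_const 1
    convert this using 1; ring
  have h3 : HasDerivAt (fun x : ℝ => 2*x + 4) 2 x := by
    simpa using ((hasDerivAt_id x).const_mul 2).add_const 4
  have h4 := h3.fun_mul h2
  have h5 : HasDerivAt (fun x : ℝ => 3 * (x - 1)^2) (3 * (2 * (x-1))) x := by
    have : HasDerivAt (fun x : ℝ => (x - 1)^2) (2 * (x-1)) x := by
      simpa using ((hasDerivAt_id x).sub_const 1).fun_pow 2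
    simpa [mul_comm] using this.const_mul 3
  have : HasDerivAt pkG (2 * (x * Real.log x - x + 1) + (2*x + 4) * Real.log x - 3 * (2 * (x-1))) x := h4.sub h5
  convert this using 1
  unfold pkG1; ring

private lemma pkG1_hasDeriv {x : ℝ} (hx : 0 < x) : HasDerivAt pkG1 (pkG2 x) x := by
  have hlog : HasDerivAt Real.log (1/x) x := (Real.hasDerivAt_log hx.ne').congr_deriv (by ring)
  have h3 : HasDerivAt (fun x : ℝ => 4*x + 4) 4 x := by
    simpa using ((hasDerivAt_id x).const_mul 4).add_const 4
  have h4 := h3.fun_mul hlog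
  have h5 : HasDerivAt (fun x : ℝ => 8*x) 8 x := by simpa using (hasDerivAt_id x).const_mul 8
  have : HasDerivAt pkG1 (4 * Real.log x + (4*x + 4) * (1/x) - 8) x := (h4.sub h5).add_const 8
  convert this using 1
  unfold pkG2
  field_simp
  ring

private lemma pkG2_nonneg {x : ℝ} (hx : 0 < x) : 0 ≤ pkG2 x := by
  have h := Real.log_le_sub_one_of_pos (show (0:ℝ) < 1/x by positivity)
  rw [Real.log_div one_ne_zero hx.ne'] at h
  simp only [Real.log_one] at h
  unfold pkG2
  have h4 : 4/x = 4*(1/x) := by ring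
  linarith

private lemma pkG1_mono : MonotoneOn pkG1 (Set.Ioi 0) := by
  apply monotoneOn_of_deriv_nonneg (convex_Ioi 0)
  · exact fun x hx => (pkG1_hasDeriv hx).continuousAt.continuousWithinAt
  · intro x hx
    rw [interior_Ioi] at hx
    exact (pkG1_hasDeriv hx).differentiableAt.differentiableWithinAt
  · intro x hx
    rw [interior_Ioi] at hx
    rw [(pkG1_hasDeriv hx).deriv]
    exact pkG2_nonneg hx

private lemma pkG1_one : pkG1 1 = 0 := by simp [pkG1]

private lemma pkG_one : pkG 1 = 0 := by simp [pkG]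

private lemma pkG_nonneg {x : ℝ} (hx : 0 < x) : 0 ≤ pkG x := by
  rcases le_total x 1 with hx1 | hx1
  · -- antitone on Ioc 0 1
    have hanti : AntitoneOn pkG (Set.Ioc 0 1) := by
      apply antitoneOn_of_deriv_nonpos (convex_Ioc 0 1)
      · exact fun y hy => (pkG_hasDeriv hy.1).continuousAt.continuousWithinAt
      · intro y hy
        rw [interior_Ioc] at hy
        exact (pkG_hasDeriv hy.1).differentiableAt.differentiableWithinAt
      · intro y hy
        rw [interior_Ioc] at hy
        rw [(pkG_hasDeriv hy.1).deriv]
        have := pkG1_mono (Set.mem_Ioi.2 hy.1) (Set.mem_Ioi.2 one_pos) hy.2.le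
        rwa [pkG1_one] at this
    have := hanti (Set.mem_Ioc.2 ⟨hx, hx1⟩) (Set.mem_Ioc.2 ⟨one_pos, le_rfl⟩) hx1
    rwa [pkG_one] at this
  · have hmono : MonotoneOn pkG (Set.Ici 1) := by
      apply monotoneOn_of_deriv_nonneg (convex_Ici 1)
      · exact fun y hy => (pkG_hasDeriv (lt_of_lt_of_le one_pos hy)).continuousAt.continuousWithinAt
      · intro y hy
        rw [interior_Ici] at hy
        exact (pkG_hasDeriv (lt_trans one_pos hy)).differentiableAt.differentiableWithinAt
      · intro y hy
        rw [interior_Ici] at hy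
        rw [(pkG_hasDeriv (lt_trans one_pos hy)).deriv]
        have := pkG1_mono (Set.mem_Ioi.2 one_pos) (Set.mem_Ioi.2 (lt_trans one_pos hy)) hy.le
        rwa [pkG1_one] at this
    have := hmono (Set.mem_Ici.2 le_rfl) (Set.mem_Ici.2 hx1) hx1
    rwa [pkG_one] at this

/-- Pointwise Pinsker inequality. -/
private lemma pinsker_pointwise {x : ℝ} (hx : 0 ≤ x) :
    3 * (x - 1)^2 ≤ (2*x + 4) * (x * Real.log x - x + 1) := by
  rcases eq_or_lt_of_le hx with h0 | h0
  · simp [← h0]; norm_num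
  · have := pkG_nonneg h0
    unfold pkG at this
    linarith


/-- Cauchy–Schwarz inequality for integrals. -/
private lemma integral_cauchy_schwarz {α : Type*} [MeasurableSpace α] {μ : Measure α}
    {f g : α → ℝ} (hf2 : Integrable (fun x => f x ^ 2) μ)
    (hg2 : Integrable (fun x => g x ^ 2) μ) (hfg : Integrable (fun x => f x * g x) μ) :
    (∫ x, f x * g x ∂μ)^2 ≤ (∫ x, f x ^ 2 ∂μ) * (∫ x, g x ^ 2 ∂μ) := by
  set A := ∫ x, f x ^ 2 ∂μ
  set B := ∫ x, f x * g x ∂μ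
  set Cc := ∫ x, g x ^ 2 ∂μ
  have key : ∀ t : ℝ, 0 ≤ A * (t * t) + (2 * B) * t + Cc := by
    intro t
    have h1 : ∀ x, 0 ≤ (t * f x + g x)^2 := fun x => sq_nonneg _
    have h2 : Integrable (fun x => (t * f x + g x)^2) μ := by
      have : (fun x => (t * f x + g x)^2)
          = fun x => t^2 * f x ^ 2 + (2 * t) * (f x * g x) + g x ^ 2 := by
        funext x; ring
      rw [this]
      exact (((hf2.const_mul _).add (hfg.const_mul _)).add hg2)
    have h3 : 0 ≤ ∫ x, (t * f x + g x)^2 ∂μ := integral_nonneg h1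
    have h4 : ∫ x, (t * f x + g x)^2 ∂μ
        = t^2 * A + (2 * t) * B + Cc := by
      rw [show (fun x => (t * f x + g x)^2)
          = fun x => t^2 * f x ^ 2 + (2 * t) * (f x * g x) + g x ^ 2 from by funext x; ring]
      have e1 : ∫ x, (t^2 * f x ^ 2 + (2*t) * (f x * g x) + g x ^ 2) ∂μ
          = (∫ x, (t^2 * f x ^ 2 + (2*t) * (f x * g x)) ∂μ) + ∫ x, g x ^ 2 ∂μ :=
        integral_add ((hf2.const_mul _).add (hfg.const_mul _)) hg2
      have e2 : ∫ x, (t^2 * f x ^ 2 + (2*t) * (f x * g x)) ∂μ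
          = (∫ x, t^2 * f x ^ 2 ∂μ) + ∫ x, (2*t) * (f x * g x) ∂μ :=
        integral_add (hf2.const_mul _) (hfg.const_mul _)
      rw [e1, e2, integral_const_mul, integral_const_mul]
    nlinarith [h3, h4]
  have := discrim_le_zero key
  rw [discrim] at this
  nlinarith [this]


private lemma pinsker_aux {α : Type*} [MeasurableSpace α] (P Q : Measure α)
    [IsProbabilityMeasure P] [IsProbabilityMeasure Q] (hPQ : P ≪ Q)
    (hint : Integrable (llr P Q) P) :
    0 ≤ ∫ x, llr P Q x ∂P ∧
    (∫ x, |(P.rnDeriv Q x).toReal - 1| ∂Q)^2 ≤ 2 * ∫ x, llr P Q x ∂P := by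
  set ρ : α → ℝ := fun x => (P.rnDeriv Q x).toReal with hρdef
  have hρmeas : Measurable ρ := (Measure.measurable_rnDeriv P Q).ennreal_toReal
  have hρ0 : ∀ x, 0 ≤ ρ x := fun x => ENNReal.toReal_nonneg
  have hρint : Integrable ρ Q := Measure.integrable_toReal_rnDeriv
  have hρ1 : ∫ x, ρ x ∂Q = 1 := by
    rw [Measure.integral_toReal_rnDeriv hPQ]; simp
  set K := ∫ x, llr P Q x ∂P with hK
  have hKQ : ∫ x, ρ x * Real.log (ρ x) ∂Q = K := by
    rw [hK]
    have := integral_rnDeriv_smul (μ := P) (ν := Q) hPQ (f := llr P Q)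
    simpa [smul_eq_mul, llr] using this
  have hmulint : Integrable (fun x => ρ x * Real.log (ρ x)) Q := by
    have := (integrable_rnDeriv_smul_iff (μ := P) (ν := Q) (f := llr P Q) hPQ).mpr hint
    simpa [smul_eq_mul, llr] using this
  set F : α → ℝ := fun x => ρ x * Real.log (ρ x) - ρ x + 1 with hFdef
  have hFmeas : Measurable F :=
    ((hρmeas.mul (Real.measurable_log.comp hρmeas)).sub hρmeas).add_const 1
  have hFint : Integrable F Q := (hmulint.sub hρint).add (integrable_const 1)
  have hFnonneg : ∀ x, 0 ≤ F x := by
    intro x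
    have h := pinsker_pointwise (hρ0 x)
    show 0 ≤ ρ x * Real.log (ρ x) - ρ x + 1
    nlinarith [sq_nonneg (ρ x - 1), hρ0 x]
  have e1 : ∫ x, F x ∂Q = (∫ x, (ρ x * Real.log (ρ x) - ρ x) ∂Q) + ∫ x, (1:ℝ) ∂Q :=
    integral_add (hmulint.sub hρint) (integrable_const 1)
  have e2 : ∫ x, (ρ x * Real.log (ρ x) - ρ x) ∂Q
      = (∫ x, ρ x * Real.log (ρ x) ∂Q) - ∫ x, ρ x ∂Q := integral_sub hmulint hρint
  have hFint_eq : ∫ x, F x ∂Q = K := by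
    rw [e1, e2, hKQ, hρ1]; simp
  have hK0 : 0 ≤ K := by
    rw [← hFint_eq]; exact integral_nonneg hFnonneg
  refine ⟨hK0, ?_⟩
  set f : α → ℝ := fun x => Real.sqrt ((2 * ρ x + 4)/3) with hfdef
  set g : α → ℝ := fun x => Real.sqrt (F x) with hgdef
  have hf2 : ∀ x, f x ^ 2 = (2 * ρ x + 4)/3 := fun x =>
    Real.sq_sqrt (by have := hρ0 x; linarith)
  have hg2 : ∀ x, g x ^ 2 = F x := fun x => Real.sq_sqrt (hFnonneg x)
  have hf2int : Integrable (fun x => f x ^ 2) Q := by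
    simp only [hf2]
    exact ((hρint.const_mul 2).add (integrable_const 4)).div_const 3
  have hg2int : Integrable (fun x => g x ^ 2) Q := by simp only [hg2]; exact hFint
  have hfgmeas : AEStronglyMeasurable (fun x => f x * g x) Q := by
    exact ((((hρmeas.const_mul 2).add_const 4).div_const 3).sqrt.mul
      hFmeas.sqrt).aestronglyMeasurable
  have hfgint : Integrable (fun x => f x * g x) Q := by
    refine Integrable.mono' ((hf2int.add hg2int).div_const 2) hfgmeas ?_
    filter_upwards with x
    have h1 : 0 ≤ f x := Real.sqrt_nonneg _
    have h2 : 0 ≤ g x := Real.sqrt_nonneg _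
    rw [Real.norm_eq_abs, abs_of_nonneg (mul_nonneg h1 h2)]
    show f x * g x ≤ (f x ^ 2 + g x ^ 2) / 2
    nlinarith [sq_nonneg (f x - g x)]
  have hpoint : ∀ x, |ρ x - 1| ≤ f x * g x := by
    intro x
    have h := pinsker_pointwise (hρ0 x)
    have hsq : (ρ x - 1)^2 ≤ (f x * g x)^2 := by
      rw [mul_pow, hf2, hg2]
      show (ρ x - 1)^2 ≤ (2 * ρ x + 4)/3 * (ρ x * Real.log (ρ x) - ρ x + 1)
      nlinarith
    have := Real.sqrt_le_sqrt hsq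
    rwa [Real.sqrt_sq_eq_abs,
      Real.sqrt_sq (mul_nonneg (Real.sqrt_nonneg _) (Real.sqrt_nonneg _))] at this
  have habsint : Integrable (fun x => |ρ x - 1|) Q := (hρint.sub (integrable_const 1)).abs
  have h1 : ∫ x, |ρ x - 1| ∂Q ≤ ∫ x, f x * g x ∂Q :=
    integral_mono habsint hfgint hpoint
  have h2 := integral_cauchy_schwarz hf2int hg2int hfgint
  have e3 : ∫ x, (2 * ρ x + 4) ∂Q = (∫ x, 2 * ρ x ∂Q) + ∫ x, (4:ℝ) ∂Q :=
    integral_add (hρint.const_mul 2) (integrable_const 4)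
  have h3 : ∫ x, f x ^ 2 ∂Q = 2 := by
    simp only [hf2]
    rw [integral_div, e3, integral_const_mul, hρ1]
    simp
    norm_num
  have h4 : ∫ x, g x ^ 2 ∂Q = K := by simp only [hg2]; exact hFint_eq
  rw [h3, h4] at h2
  show (∫ x, |ρ x - 1| ∂Q)^2 ≤ 2 * K
  have h0 : 0 ≤ ∫ x, |ρ x - 1| ∂Q := integral_nonneg fun x => abs_nonneg _
  nlinarith [h1, h2, h0]


/-- **GEM meta-gradient estimation error bound.** In the setting of the hierarchical
meta-gradient identity (likelihood `ℓ` independent of `Θ`, prior family `pr(Θ, ·)`), if the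
prior score `∂_Θ log pr(Θ₀, θ) = pr'(Θ₀,θ)/pr(Θ₀,θ)` is bounded by `C` (a.e. for Lebesgue
measure and for `Q`), then the GEM estimator `gHat = E_Q[∂_Θ log pr(Θ₀, θ)]` built from any
probability measure `Q` satisfies
`|gHat − d/dΘ log m(Θ)|_{Θ₀}| ≤ C √(2 KL(post ‖ Q))`, where `post` is the posterior measure
with density `ℓ(θ)pr(Θ₀,θ)/m(Θ₀)`. -/
theorem gem_estimation_error_bound
    {d : ℕ} (ℓ : (Fin d → ℝ) → ℝ) (pr pr' : ℝ → (Fin d → ℝ) → ℝ) (Θ₀ : ℝ) (U : Set ℝ)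
    (hU : U ∈ nhds Θ₀)
    (hℓmeas : Measurable ℓ) (hℓ0 : ∀ θ, 0 ≤ ℓ θ)
    (hprmeas : Measurable (Function.uncurry pr))
    (hpr'meas : Measurable (Function.uncurry pr'))
    (hpr0 : ∀ Θ θ, 0 ≤ pr Θ θ)
    (hint : ∀ Θ ∈ U, Integrable (fun θ => ℓ θ * pr Θ θ))
    (m : ℝ → ℝ) (hm : ∀ Θ, m Θ = ∫ θ, ℓ θ * pr Θ θ)
    (hm0 : 0 < m Θ₀)
    (hpos : ∀ᵐ θ ∂(volume : Measure (Fin d → ℝ)), 0 < ℓ θ * pr Θ₀ θ)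
    (hderiv : ∀ᵐ θ ∂(volume : Measure (Fin d → ℝ)),
      ∀ Θ ∈ U, HasDerivAt (fun Θ' => pr Θ' θ) (pr' Θ θ) Θ)
    (g : (Fin d → ℝ) → ℝ) (hg : Integrable g)
    (hbound : ∀ᵐ θ ∂(volume : Measure (Fin d → ℝ)), ∀ Θ ∈ U, |ℓ θ * pr' Θ θ| ≤ g θ)
    (C : ℝ)
    (hCvol : ∀ᵐ θ ∂(volume : Measure (Fin d → ℝ)), |pr' Θ₀ θ / pr Θ₀ θ| ≤ C)
    (Q : Measure (Fin d → ℝ)) [IsProbabilityMeasure Q]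
    (hCQ : ∀ᵐ θ ∂Q, |pr' Θ₀ θ / pr Θ₀ θ| ≤ C)
    (post : Measure (Fin d → ℝ))
    (hpostdef : post =
      (volume : Measure (Fin d → ℝ)).withDensity
        (fun θ => ENNReal.ofReal (ℓ θ * pr Θ₀ θ / m Θ₀)))
    (gHat : ℝ) (hgHat : gHat = ∫ θ, pr' Θ₀ θ / pr Θ₀ θ ∂Q) :
    ENNReal.ofReal |gHat - deriv (fun Θ => Real.log (m Θ)) Θ₀| ≤
      ENNReal.ofReal C * (2 * klDiv post Q) ^ (1/2 : ℝ) := by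
  have hΘ₀U : Θ₀ ∈ U := mem_of_mem_nhds hU
  set f : (Fin d → ℝ) → ℝ := fun θ => pr' Θ₀ θ / pr Θ₀ θ with hfdef
  have hprΘmeas : Measurable (fun θ => pr Θ₀ θ) :=
    hprmeas.comp (measurable_const.prodMk measurable_id)
  have hpr'Θmeas : Measurable (fun θ => pr' Θ₀ θ) :=
    hpr'meas.comp (measurable_const.prodMk measurable_id)
  have hfmeas : Measurable f := hpr'Θmeas.div hprΘmeas
  -- C ≥ 0
  haveI : (ae Q).NeBot := ae_neBot.2 (IsProbabilityMeasure.ne_zero Q)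
  obtain ⟨θC, hθC⟩ := hCQ.exists
  have hC0 : 0 ≤ C := le_trans (abs_nonneg _) hθC
  -- post is a probability measure
  have hpostac : post ≪ (volume : Measure (Fin d → ℝ)) := by
    rw [hpostdef]; exact withDensity_absolutelyContinuous _ _
  have hintΘ₀ : Integrable (fun θ => ℓ θ * pr Θ₀ θ) := hint Θ₀ hΘ₀U
  haveI hpostprob : IsProbabilityMeasure post := by
    constructor
    rw [hpostdef, withDensity_apply _ MeasurableSet.univ, setLIntegral_univ,
      ← ofReal_integral_eq_lintegral_ofReal (hintΘ₀.div_const _)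
        (Filter.Eventually.of_forall fun θ => by
          have h1 := hℓ0 θ; have h2 := hpr0 Θ₀ θ; positivity)]
    rw [integral_div, ← hm Θ₀, div_self hm0.ne']
    simp
  -- derivative of m
  obtain ⟨ε, hε, hball⟩ := Metric.mem_nhds_iff.1 hU
  have hmderiv : Integrable (fun θ => ℓ θ * pr' Θ₀ θ) ∧
      HasDerivAt (fun Θ => ∫ θ, ℓ θ * pr Θ θ) (∫ θ, ℓ θ * pr' Θ₀ θ) Θ₀ := by
    apply hasDerivAt_integral_of_dominated_loc_of_deriv_le
      (F := fun Θ θ => ℓ θ * pr Θ θ) (F' := fun Θ θ => ℓ θ * pr' Θ θ) (bound := g) (Metric.ball_mem_nhds Θ₀ hε)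
      ?_ hintΘ₀ ?_ ?_ hg ?_
    · exact Filter.Eventually.of_forall fun x =>
        (hℓmeas.mul (hprmeas.comp (measurable_const.prodMk measurable_id))).aestronglyMeasurable
    · exact (hℓmeas.mul hpr'Θmeas).aestronglyMeasurable
    · filter_upwards [hbound] with θ hθ x hx
      rw [Real.norm_eq_abs]
      exact hθ x (hball hx)
    · filter_upwards [hderiv] with θ hθ x hx
      exact ((hθ x (hball hx)).const_mul (ℓ θ))
  set I := ∫ θ, ℓ θ * pr' Θ₀ θ with hI
  have hmd : HasDerivAt m I Θ₀ := by
    have : m = fun Θ => ∫ θ, ℓ θ * pr Θ θ := funext hm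
    rw [this]
    exact hmderiv.2
  have hlogd : deriv (fun Θ => Real.log (m Θ)) Θ₀ = I / m Θ₀ := (hmd.log hm0.ne').deriv
  -- posterior integral of f
  have hdensnn : ∀ θ, 0 ≤ ℓ θ * pr Θ₀ θ / m Θ₀ := fun θ => by
    have := hℓ0 θ; have := hpr0 Θ₀ θ; positivity
  have hpostint : ∫ θ, f θ ∂post = I / m Θ₀ := by
    rw [hpostdef]
    rw [show (fun θ => ENNReal.ofReal (ℓ θ * pr Θ₀ θ / m Θ₀))
        = (fun θ => ((ℓ θ * pr Θ₀ θ / m Θ₀).toNNReal : ℝ≥0∞)) from rfl]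
    rw [integral_withDensity_eq_integral_smul
      ((hℓmeas.fun_mul hprΘmeas).div_const _).real_toNNReal f]
    rw [← integral_div]
    apply integral_congr_ae
    filter_upwards [hpos] with θ hθ
    have hpr : 0 < pr Θ₀ θ := by
      rcases (mul_pos_iff.1 hθ) with ⟨_, h⟩ | ⟨h, _⟩
      · exact h
      · exact absurd (hℓ0 θ) (not_le.2 h)
    rw [NNReal.smul_def, Real.coe_toNNReal _ (hdensnn θ)]
    show ℓ θ * pr Θ₀ θ / m Θ₀ * (pr' Θ₀ θ / pr Θ₀ θ) = ℓ θ * pr' Θ₀ θ / m Θ₀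
    field_simp
  have hID : deriv (fun Θ => Real.log (m Θ)) Θ₀ = ∫ θ, f θ ∂post := by
    rw [hlogd, hpostint]
  rw [hgHat, hID]
  by_cases hCz : C = 0
  · have hQ0 : ∫ θ, f θ ∂Q = 0 := by
      apply integral_eq_zero_of_ae
      filter_upwards [hCQ] with θ h
      rw [hCz] at h
      exact abs_nonpos_iff.1 h
    have hP0 : ∫ θ, f θ ∂post = 0 := by
      apply integral_eq_zero_of_ae
      have hv : ∀ᵐ θ ∂(volume : Measure (Fin d → ℝ)), f θ = 0 := by
        filter_upwards [hCvol] with θ h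
        rw [hCz] at h
        exact abs_nonpos_iff.1 h
      exact hv.filter_mono hpostac.ae_le
    rw [hQ0, hP0]
    simp
  · have hCpos : 0 < C := lt_of_le_of_ne hC0 (Ne.symm hCz)
    by_cases hkl : post ≪ Q ∧ Integrable (llr post Q) post
    · obtain ⟨hac, hil⟩ := hkl
      rw [show klDiv post Q = ENNReal.ofReal (∫ x, llr post Q x ∂post) from by
        unfold klDiv; rw [if_pos ⟨hac, hil⟩]]
      obtain ⟨hK0, hpins⟩ := pinsker_aux post Q hac hil
      set K := ∫ x, llr post Q x ∂post with hKdef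
      set ρ : (Fin d → ℝ) → ℝ := fun x => (post.rnDeriv Q x).toReal with hρdef
      set T := ∫ x, |ρ x - 1| ∂Q with hTdef
      have hfQ : Integrable f Q := by
        refine Integrable.mono' (integrable_const C) hfmeas.aestronglyMeasurable ?_
        filter_upwards [hCQ] with θ h
        rwa [Real.norm_eq_abs]
      have hfpost : Integrable f post := by
        refine Integrable.mono' (integrable_const C) hfmeas.aestronglyMeasurable ?_
        filter_upwards [hCvol.filter_mono hpostac.ae_le] with θ h
        rwa [Real.norm_eq_abs]
      haveI : post.HaveLebesgueDecomposition Q :=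
        Measure.haveLebesgueDecomposition_of_finiteMeasure
      have hρf : Integrable (fun x => ρ x * f x) Q := by
        simpa [smul_eq_mul] using (integrable_rnDeriv_smul_iff (μ := post) (ν := Q) hac (f := f)).mpr hfpost
      have htrans : ∫ θ, f θ ∂post = ∫ x, ρ x * f x ∂Q := by
        simpa [smul_eq_mul] using (integral_rnDeriv_smul (μ := post) (ν := Q) hac (f := f)).symm
      have hρint : Integrable ρ Q := Measure.integrable_toReal_rnDeriv
      have habs : |(∫ θ, f θ ∂Q) - ∫ θ, f θ ∂post| ≤ C * T := by
        rw [htrans, ← integral_sub hfQ hρf]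
        calc |∫ x, (f x - ρ x * f x) ∂Q| ≤ ∫ x, |f x - ρ x * f x| ∂Q := by
              simpa [Real.norm_eq_abs] using
                norm_integral_le_integral_norm (fun x => f x - ρ x * f x) (μ := Q)
          _ ≤ ∫ x, C * |ρ x - 1| ∂Q := by
              apply integral_mono_ae (hfQ.sub hρf).abs
                (((hρint.sub (integrable_const 1)).abs).const_mul C)
              filter_upwards [hCQ] with θ h
              simp only [Pi.sub_apply]
              have h1 : f θ - ρ θ * f θ = f θ * (1 - ρ θ) := by ring
              rw [h1, abs_mul, abs_sub_comm (1:ℝ) (ρ θ)]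
              exact mul_le_mul_of_nonneg_right h (abs_nonneg _)
          _ = C * T := by rw [integral_const_mul]
      have hT0 : 0 ≤ T := integral_nonneg fun x => abs_nonneg _
      have hTle : T ≤ Real.sqrt (2 * K) := (Real.le_sqrt hT0 (by linarith)).2 hpins
      have hfinal : |(∫ θ, f θ ∂Q) - ∫ θ, f θ ∂post| ≤ C * Real.sqrt (2 * K) :=
        habs.trans (mul_le_mul_of_nonneg_left hTle hC0)
      calc ENNReal.ofReal |(∫ θ, f θ ∂Q) - ∫ θ, f θ ∂post|
          ≤ ENNReal.ofReal (C * Real.sqrt (2 * K)) := ENNReal.ofReal_le_ofReal hfinal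
        _ = ENNReal.ofReal C * ENNReal.ofReal (Real.sqrt (2 * K)) := ENNReal.ofReal_mul hC0
        _ = ENNReal.ofReal C * (2 * ENNReal.ofReal K) ^ (1/2 : ℝ) := by
            congr 1
            rw [Real.sqrt_eq_rpow,
              ← ENNReal.ofReal_rpow_of_nonneg (by linarith) (by norm_num),
              ENNReal.ofReal_mul (by norm_num : (0:ℝ) ≤ 2)]
            norm_num
    · rw [show klDiv post Q = ⊤ from by unfold klDiv; rw [if_neg hkl]]
      rw [ENNReal.mul_top (by norm_num : (2:ℝ≥0∞) ≠ 0),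
        ENNReal.top_rpow_of_pos (by norm_num),
        ENNReal.mul_top (by simpa using (ENNReal.ofReal_pos.2 hCpos).ne')]
      exact le_top
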